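/- Let x ∈ ℝⁿ, r̄ ∈ ℝⁿ, κ ≥ 0 and ε ≥ 0. Then the maximum of the function r ↦ κ xᵀΣx − rᵀx over the ellipsoid {r ∈ ℝⁿ : (r − r̄)ᵀΣ⁻¹(r − r̄) ≤ ε} is attained and equals κ xᵀΣx − r̄ᵀx + √ε · √(xᵀΣx). (This reduces the robust mean–variance model with ellipsoidal uncertainty set and Ω = Σ to a deterministic objective.) -/

import Mathlib

open Matrix

lemma dot_symm {n : ℕ} (B : Matrix (Fin n) (Fin n) ℝ) (hBs : B.IsSymm)
    (s c : Fin n → ℝ) : s ⬝ᵥ B *ᵥ c = c ⬝ᵥ B *ᵥ s := by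
  rw [dotProduct_mulVec, ← mulVec_transpose, hBs.eq, dotProduct_comm]

lemma cs {n : ℕ} (B : Matrix (Fin n) (Fin n) ℝ) (hB : B.PosDef) (hBs : B.IsSymm)
    (s c : Fin n → ℝ) :
    (s ⬝ᵥ B *ᵥ c)^2 ≤ (s ⬝ᵥ B *ᵥ s) * (c ⬝ᵥ B *ᵥ c) := by
  by_cases hc : c = 0
  · simp [hc]
  have hq : 0 < c ⬝ᵥ B *ᵥ c := by simpa using hB.dotProduct_mulVec_pos hc
  set t : ℝ := (s ⬝ᵥ B *ᵥ c) / (c ⬝ᵥ B *ᵥ c) with ht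
  have h0 : 0 ≤ (s - t • c) ⬝ᵥ B *ᵥ (s - t • c) := by
    simpa using hB.posSemidef.dotProduct_mulVec_nonneg (s - t • c)
  have hexp : (s - t • c) ⬝ᵥ B *ᵥ (s - t • c)
      = s ⬝ᵥ B *ᵥ s - 2 * t * (s ⬝ᵥ B *ᵥ c) + t^2 * (c ⬝ᵥ B *ᵥ c) := by
    simp only [sub_dotProduct, mulVec_sub, dotProduct_sub, mulVec_smul,
      smul_dotProduct, dotProduct_smul, smul_eq_mul, dot_symm B hBs c s]
    ring
  rw [hexp] at h0
  have htq : t * (c ⬝ᵥ B *ᵥ c) = s ⬝ᵥ B *ᵥ c := by rw [ht]; field_simp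
  nlinarith [sq_nonneg t]

theorem stmt0 (n : ℕ) (hn : 1 ≤ n) (A : Matrix (Fin n) (Fin n) ℝ)
    (hA : A.PosDef) (hAs : A.IsSymm)
    (x rbar : Fin n → ℝ) (κ ε : ℝ) (hκ : 0 ≤ κ) (hε : 0 ≤ ε) :
    IsGreatest {v : ℝ | ∃ r : Fin n → ℝ,
        (r - rbar) ⬝ᵥ (A⁻¹ *ᵥ (r - rbar)) ≤ ε ∧ v = κ * (x ⬝ᵥ A *ᵥ x) - r ⬝ᵥ x}
      (κ * (x ⬝ᵥ A *ᵥ x) - rbar ⬝ᵥ x + Real.sqrt ε * Real.sqrt (x ⬝ᵥ A *ᵥ x)) := by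
  have hAinv : A⁻¹.PosDef := hA.inv
  have hAinvS : A⁻¹.IsSymm := by
    rw [Matrix.IsSymm, Matrix.transpose_nonsing_inv, hAs.eq]
  have hInvMul : ∀ v : Fin n → ℝ, A⁻¹ *ᵥ (A *ᵥ v) = v := by
    intro v
    rw [mulVec_mulVec, Matrix.nonsing_inv_mul A hA.det_pos.ne'.isUnit, one_mulVec]
  have hq0 : 0 ≤ x ⬝ᵥ A *ᵥ x := by simpa using hA.posSemidef.dotProduct_mulVec_nonneg x
  set q : ℝ := x ⬝ᵥ A *ᵥ x with hqdef
  have hAx : (A *ᵥ x) ⬝ᵥ x = q := by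
    rw [dotProduct_comm, hqdef, dot_symm A hAs]
  constructor
  · -- membership: r = rbar - t • (A *ᵥ x)
    by_cases hx : x = 0
    · refine ⟨rbar, by simpa using hε, ?_⟩
      simp [hx, hqdef]
    · have hq : 0 < q := by simpa [hqdef] using hA.dotProduct_mulVec_pos hx
      set t : ℝ := Real.sqrt ε / Real.sqrt q with htdef
      refine ⟨rbar - t • (A *ᵥ x), ?_, ?_⟩
      · have h3 : (rbar - t • (A *ᵥ x)) - rbar = (-t) • (A *ᵥ x) := by
          rw [sub_sub_cancel_left, ← neg_smul]
        rw [h3]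
        have hIx : A⁻¹ *ᵥ ((-t) • (A *ᵥ x)) = (-t) • x := by
          rw [mulVec_smul, hInvMul]
        rw [hIx]
        have h4 : ((-t) • (A *ᵥ x)) ⬝ᵥ ((-t) • x) = t^2 * q := by
          rw [smul_dotProduct, dotProduct_smul, hAx, smul_eq_mul, smul_eq_mul]
          ring
        rw [h4, htdef, div_pow, Real.sq_sqrt hε, Real.sq_sqrt hq0,
          div_mul_cancel₀ _ hq.ne']
      · have h1 : (rbar - t • (A *ᵥ x)) ⬝ᵥ x = rbar ⬝ᵥ x - t * q := by
          rw [sub_dotProduct, smul_dotProduct, smul_eq_mul, hAx]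
        rw [h1, htdef]
        have h5 : Real.sqrt ε / Real.sqrt q * q = Real.sqrt ε * Real.sqrt q := by
          rw [div_mul_eq_mul_div, mul_div_assoc, Real.div_sqrt]
        rw [h5]; ring
  · -- upper bound
    rintro v ⟨r, hr, rfl⟩
    set s : Fin n → ℝ := rbar - r with hs
    have key : (s ⬝ᵥ x)^2 ≤ ε * q := by
      have hc := cs A⁻¹ hAinv hAinvS s (A *ᵥ x)
      rw [hInvMul, hAx] at hc
      have hsr : s ⬝ᵥ A⁻¹ *ᵥ s ≤ ε := by
        have h6 : r - rbar = -s := by rw [hs, neg_sub]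
        rw [h6, mulVec_neg, neg_dotProduct, dotProduct_neg, neg_neg] at hr
        exact hr
      calc (s ⬝ᵥ x)^2 ≤ (s ⬝ᵥ A⁻¹ *ᵥ s) * q := hc
        _ ≤ ε * q := mul_le_mul_of_nonneg_right hsr hq0
    have hsx : s ⬝ᵥ x ≤ Real.sqrt ε * Real.sqrt q := by
      calc s ⬝ᵥ x ≤ |s ⬝ᵥ x| := le_abs_self _
        _ = Real.sqrt ((s ⬝ᵥ x)^2) := (Real.sqrt_sq_eq_abs _).symm
        _ ≤ Real.sqrt (ε * q) := Real.sqrt_le_sqrt key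
        _ = Real.sqrt ε * Real.sqrt q := Real.sqrt_mul hε q
    have h7 : rbar ⬝ᵥ x - r ⬝ᵥ x = s ⬝ᵥ x := by rw [hs, sub_dotProduct]
    linarith [hsx]
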